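/- Every complex root a of the polynomial p(z) = (z+1)·( 11(z+1)⁴ + 5(z+1)² + 4 ) satisfies |a + 1| < 1; in particular, −2 < Re(a) < 0. (This polynomial is, up to the constant factor 1/20, the Ehrhart polynomial i(Δ(3,6), z) of the hypersimplex Δ(3,6).) -/

import Mathlib

theorem stmt_9 (a : ℂ) (ha : (a + 1) * (11 * (a + 1) ^ 4 + 5 * (a + 1) ^ 2 + 4) = 0) :
    ‖a + 1‖ < 1 ∧ -2 < a.re ∧ a.re < 0 := by
  have habs : ‖a + 1‖ < 1 := by
    rcases mul_eq_zero.mp ha with h | h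
    · simp [h]
    · set t : ℂ := (a + 1) ^ 2 with ht
      have h2 : 11 * t ^ 2 + 5 * t + 4 = 0 := by rw [ht]; linear_combination h
      have hre := congrArg Complex.re h2
      have him := congrArg Complex.im h2
      set x := t.re with hx
      set y := t.im with hy
      simp [Complex.add_re, Complex.add_im, Complex.mul_re, Complex.mul_im, pow_two] at hre him
      rw [← hx, ← hy] at hre him
      have hnorm : x ^ 2 + y ^ 2 = 4 / 11 := by
        have hxy : y * (22 * x + 5) = 0 := by nlinarith [him]
        rcases mul_eq_zero.mp hxy with h0 | h0
        · exfalso; rw [h0] at hre; nlinarith [sq_nonneg (22 * x + 5), hre]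
          
        · have hx5 : x = -5 / 22 := by linarith
          nlinarith [hre, hx5]
      have hsq : ‖a + 1‖ ^ 4 = 4 / 11 := by
        have : ‖t‖ = ‖a + 1‖ ^ 2 := by rw [ht, norm_pow]
        have h3 : ‖t‖ ^ 2 = x ^ 2 + y ^ 2 := by
          rw [Complex.sq_norm, Complex.normSq_apply]; ring
        nlinarith [this, h3, hnorm]
      nlinarith [norm_nonneg (a + 1), hsq, sq_nonneg (‖a + 1‖ - 1),
        sq_nonneg (‖a + 1‖ + 1), sq_nonneg (‖a + 1‖ ^ 2 - 1),
        sq_nonneg (‖a + 1‖ ^ 2 + 1)]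
  refine ⟨habs, ?_, ?_⟩ <;>
  · have h1 := Complex.abs_re_le_norm (a + 1)
    have h2 : (a + 1).re = a.re + 1 := by simp
    rw [h2] at h1
    have := abs_lt.mp (lt_of_le_of_lt h1 habs)
    linarith [this.1, this.2]
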